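/- Let C be a nonempty (n,d,w) constant-weight code with d even and d < 2w ≤ n, with distance distribution {A_{2i}}, and let H = {d/2, …, w}. Suppose i ≠ j are in H with m_{i,j} < d, and let P_i, P_j be integers with P_i ≥ T(i,w,i,n−w,d) and P_j ≥ T(j,w,j,n−w,d). Then A_{2i}/P_i + A_{2j}/P_j ≤ 1. -/

import Mathlib

/-- The number of ones of a binary vector. -/
def wtOnes {n : ℕ} (u : Fin n → ZMod 2) : ℕ :=
  (Finset.univ.filter (fun t => u t = 1)).card

/-- `C` is an `(n,d,w)` constant-weight binary code. -/
def IsCWCode (n d w : ℕ) (C : Finset (Fin n → ZMod 2)) : Prop :=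
  (∀ c ∈ C, wtOnes c = w) ∧
  ∀ u ∈ C, ∀ v ∈ C, u ≠ v → d ≤ hammingDist u v

/-- `A n d w`: the largest possible size of an `(n,d,w)` constant-weight code. -/
noncomputable def A (n d w : ℕ) : ℕ :=
  sSup {M | ∃ C : Finset (Fin n → ZMod 2), IsCWCode n d w C ∧ C.card = M}

/-- `C` is a `(w1,n1,w2,n2,d)` doubly-constant-weight binary code. -/
def IsDCWCode (w1 n1 w2 n2 d : ℕ) (C : Finset (Fin n1 ⊕ Fin n2 → ZMod 2)) : Prop :=
  (∀ c ∈ C,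
    (Finset.univ.filter (fun t : Fin n1 => c (Sum.inl t) = 1)).card = w1 ∧
    (Finset.univ.filter (fun t : Fin n2 => c (Sum.inr t) = 1)).card = w2) ∧
  ∀ u ∈ C, ∀ v ∈ C, u ≠ v → d ≤ hammingDist u v

/-- `T w1 n1 w2 n2 d`: the largest possible size of a `(w1,n1,w2,n2,d)`
doubly-constant-weight code. -/
noncomputable def T (w1 n1 w2 n2 d : ℕ) : ℕ :=
  sSup {M | ∃ C : Finset (Fin n1 ⊕ Fin n2 → ZMod 2), IsDCWCode w1 n1 w2 n2 d C ∧ C.card = M}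

/-- `S_i(c)`: the set of codewords of `C` at distance `i` from `c`. -/
def Sdist {n : ℕ} (C : Finset (Fin n → ZMod 2)) (c : Fin n → ZMod 2) (i : ℕ) :
    Finset (Fin n → ZMod 2) :=
  C.filter (fun u => hammingDist u c = i)

/-- The distance distribution `A_i = (1/|C|) ∑_{c ∈ C} |S_i(c)|` of a code `C`. -/
noncomputable def distDistr {n : ℕ} (C : Finset (Fin n → ZMod 2)) (i : ℕ) : ℚ :=
  (∑ c ∈ C, ((Sdist C c i).card : ℚ)) / (C.card : ℚ)

/-- `V_i`: vectors of `F^n` with exactly `i` ones on the first `w` coordinates and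
exactly `i` ones on the last `n - w` coordinates. -/
def Vset (n w i : ℕ) : Finset (Fin n → ZMod 2) :=
  Finset.univ.filter (fun u =>
    (Finset.univ.filter (fun t : Fin n => t.val < w ∧ u t = 1)).card = i ∧
    (Finset.univ.filter (fun t : Fin n => w ≤ t.val ∧ u t = 1)).card = i)

/-- `m_{i,j} = max { d(u,v) : u ∈ V_i, v ∈ V_j }`. -/
def mMax (n w i j : ℕ) : ℕ :=
  ((Vset n w i) ×ˢ (Vset n w j)).sup fun p => hammingDist p.1 p.2

/-- `P⁻_k(n;x) = ∑_{j odd} C(x,j) C(n-x,k-j)`. -/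
def Pminus (k n x : ℕ) : ℕ :=
  ∑ j ∈ Finset.range (k + 1), if Odd j then x.choose j * (n - x).choose (k - j) else 0

/-- `P⁺_k(n;x) = ∑_{j even} C(x,j) C(n-x,k-j)`. -/
def Pplus (k n x : ℕ) : ℕ :=
  ∑ j ∈ Finset.range (k + 1), if Even j then x.choose j * (n - x).choose (k - j) else 0

/-- The Krawtchouk polynomial `P_k(n;x) = ∑_j (-1)^j C(x,j) C(n-x,k-j)` at integer points. -/
def Kraw (k n x : ℕ) : ℤ :=
  ∑ j ∈ Finset.range (k + 1), (-1 : ℤ) ^ j * x.choose j * (n - x).choose (k - j)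



lemma zmod2_em (x : ZMod 2) : x = 0 ∨ x = 1 := by revert x; decide

lemma card_filter_equiv {α β : Type*} [Fintype α] [Fintype β] [DecidableEq β]
    (e : α ≃ β) (p : β → Prop) [DecidablePred p] :
    (Finset.univ.filter fun a => p (e a)).card = (Finset.univ.filter p).card := by
  rw [← Finset.card_map (e.toEmbedding)]
  congr 1
  ext b
  simp only [Finset.mem_map, Finset.mem_filter, Finset.mem_univ, true_and,
    Equiv.coe_toEmbedding]
  constructor
  · rintro ⟨a, ha, rfl⟩; exact ha
  · intro hb; exact ⟨e.symm b, by simpa using hb, by simp⟩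

lemma hammingDist_filter {n : ℕ} (x y : Fin n → ZMod 2) :
    hammingDist x y = (Finset.univ.filter fun t => x t ≠ y t).card := rfl

lemma hammingDist_comp_equiv {α β : Type*} [Fintype α] [Fintype β] [DecidableEq β]
    (e : α ≃ β) (x y : β → ZMod 2) :
    hammingDist (x ∘ e) (y ∘ e) = hammingDist x y := by
  show (Finset.univ.filter fun t => x (e t) ≠ y (e t)).card
      = (Finset.univ.filter fun t => x t ≠ y t).card
  exact card_filter_equiv e (fun t => x t ≠ y t)

/-- the counting lemma -/
lemma count_split {n w ii : ℕ} {u c : Fin n → ZMod 2} (hu : wtOnes u = w)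
    (hc : wtOnes c = w) (hdist : hammingDist u c = 2 * ii) :
    (Finset.univ.filter fun x => c x = 1 ∧ u x = 0).card = ii ∧
    (Finset.univ.filter fun x => c x = 0 ∧ u x = 1).card = ii := by
  classical
  set A := (Finset.univ.filter fun x => c x = 1 ∧ u x = 0).card with hA
  set B := (Finset.univ.filter fun x => c x = 0 ∧ u x = 1).card with hB
  set D := (Finset.univ.filter fun x : Fin n => c x = 1 ∧ u x = 1).card with hD
  have h1 : hammingDist u c = A + B := by
    rw [hammingDist_filter]
    rw [← Finset.card_filter_add_card_filter_not (s := Finset.univ.filter fun t => u t ≠ c t) (fun x => c x = 1)]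
    rw [Finset.filter_filter, Finset.filter_filter]
    congr 1
    all_goals
      congr 1; ext x; simp only [Finset.mem_filter, Finset.mem_univ, true_and]
      rcases zmod2_em (u x) with h | h <;> rcases zmod2_em (c x) with h' | h' <;> simp [h, h']
  have h2 : wtOnes u = D + B := by
    rw [wtOnes, ← Finset.card_filter_add_card_filter_not (s := Finset.univ.filter fun t => u t = 1) (fun x => c x = 1)]
    rw [Finset.filter_filter, Finset.filter_filter]
    congr 1
    all_goals
      congr 1; ext x; simp only [Finset.mem_filter, Finset.mem_univ, true_and]
      rcases zmod2_em (u x) with h | h <;> rcases zmod2_em (c x) with h' | h' <;> simp [h, h']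
  have h3 : wtOnes c = D + A := by
    rw [wtOnes, ← Finset.card_filter_add_card_filter_not (s := Finset.univ.filter fun t => c t = 1) (fun x => u x = 1)]
    rw [Finset.filter_filter, Finset.filter_filter]
    congr 1
    all_goals
      congr 1; ext x; simp only [Finset.mem_filter, Finset.mem_univ, true_and]
      rcases zmod2_em (u x) with h | h <;> rcases zmod2_em (c x) with h' | h' <;> simp [h, h']
  omega

lemma count_transfer_left {n w : ℕ} (h : w + (n - w) = n) (p : Fin n → Prop)
    [DecidablePred p] :
    (Finset.univ.filter fun t : Fin w => p (finCongr h (finSumFinEquiv (Sum.inl t)))).card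
      = (Finset.univ.filter fun t : Fin n => t.val < w ∧ p t).card := by
  apply Finset.card_bij (fun t _ => finCongr h (finSumFinEquiv (Sum.inl t)))
  · intro a ha
    simp only [Finset.mem_filter, Finset.mem_univ, true_and] at ha ⊢
    refine ⟨?_, ha⟩
    simpa [finSumFinEquiv_apply_left] using a.isLt
  · intro a _ b _ hab
    have : (Sum.inl a : Fin w ⊕ Fin (n - w)) = Sum.inl b := by
      apply finSumFinEquiv.injective
      exact (finCongr h).injective hab
    simpa using this
  · intro b hb
    simp only [Finset.mem_filter, Finset.mem_univ, true_and] at hb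
    obtain ⟨hb1, hb2⟩ := hb
    refine ⟨⟨b.val, hb1⟩, ?_, ?_⟩
    · have he : finCongr h (finSumFinEquiv (Sum.inl (⟨b.val, hb1⟩ : Fin w))) = b := by
        apply Fin.ext
        simp [finSumFinEquiv_apply_left]
      simp only [Finset.mem_filter, Finset.mem_univ, true_and, he]
      exact hb2
    · apply Fin.ext
      simp [finSumFinEquiv_apply_left]

lemma count_transfer_right {n w : ℕ} (h : w + (n - w) = n) (p : Fin n → Prop)
    [DecidablePred p] :
    (Finset.univ.filter fun t : Fin (n - w) => p (finCongr h (finSumFinEquiv (Sum.inr t)))).card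
      = (Finset.univ.filter fun t : Fin n => w ≤ t.val ∧ p t).card := by
  apply Finset.card_bij (fun t _ => finCongr h (finSumFinEquiv (Sum.inr t)))
  · intro a ha
    simp only [Finset.mem_filter, Finset.mem_univ, true_and] at ha ⊢
    refine ⟨?_, ha⟩
    simp [finSumFinEquiv_apply_right]
  · intro a _ b _ hab
    have : (Sum.inr a : Fin w ⊕ Fin (n - w)) = Sum.inr b := by
      apply finSumFinEquiv.injective
      exact (finCongr h).injective hab
    simpa using this
  · intro b hb
    simp only [Finset.mem_filter, Finset.mem_univ, true_and] at hb
    obtain ⟨hb1, hb2⟩ := hb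
    have hlt : b.val - w < n - w := by omega
    refine ⟨⟨b.val - w, hlt⟩, ?_, ?_⟩
    · have he : finCongr h (finSumFinEquiv (Sum.inr (⟨b.val - w, hlt⟩ : Fin (n - w)))) = b := by
        apply Fin.ext
        simp [finSumFinEquiv_apply_right]
        omega
      simp only [Finset.mem_filter, Finset.mem_univ, true_and, he]
      exact hb2
    · apply Fin.ext
      simp [finSumFinEquiv_apply_right]
      omega

lemma T_bddAbove (w1 n1 w2 n2 d : ℕ) :
    BddAbove {M | ∃ C : Finset (Fin n1 ⊕ Fin n2 → ZMod 2), IsDCWCode w1 n1 w2 n2 d C ∧ C.card = M} := by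
  refine ⟨Fintype.card (Fin n1 ⊕ Fin n2 → ZMod 2), ?_⟩
  rintro M ⟨C, _, rfl⟩
  exact Finset.card_le_univ C

lemma card_le_T {w1 n1 w2 n2 d : ℕ} (C : Finset (Fin n1 ⊕ Fin n2 → ZMod 2))
    (h : IsDCWCode w1 n1 w2 n2 d C) : C.card ≤ T w1 n1 w2 n2 d :=
  le_csSup (T_bddAbove w1 n1 w2 n2 d) ⟨C, h, rfl⟩

lemma card_filter_val_lt (m k : ℕ) (hk : k ≤ m) :
    (Finset.univ.filter fun t : Fin m => t.val < k).card = k := by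
  rcases Nat.lt_or_ge k m with h | h
  · have : (Finset.univ.filter fun t : Fin m => t.val < k) = Finset.Iio (⟨k, h⟩ : Fin m) := by
      ext t; simp [Fin.lt_def]
    rw [this, Fin.card_Iio]
  · have hk' : k = m := le_antisymm hk h
    rw [hk']
    have : (Finset.univ.filter fun t : Fin m => t.val < m) = Finset.univ := by
      ext t; simp [t.isLt]
    rw [this, Finset.card_univ, Fintype.card_fin]

lemma one_le_T {w1 n1 w2 n2 d : ℕ} (h1 : w1 ≤ n1) (h2 : w2 ≤ n2) :
    1 ≤ T w1 n1 w2 n2 d := by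
  classical
  set c : Fin n1 ⊕ Fin n2 → ZMod 2 := fun t =>
    Sum.elim (fun a : Fin n1 => if a.val < w1 then (1 : ZMod 2) else 0)
      (fun b : Fin n2 => if b.val < w2 then (1 : ZMod 2) else 0) t with hcdef
  have key : ∀ (m k : ℕ), k ≤ m →
      (Finset.univ.filter fun t : Fin m => (if t.val < k then (1 : ZMod 2) else 0) = 1).card = k := by
    intro m k hk
    have : (Finset.univ.filter fun t : Fin m => (if t.val < k then (1 : ZMod 2) else 0) = 1)
        = Finset.univ.filter fun t : Fin m => t.val < k := by
      ext t
      by_cases h : t.val < k <;> simp [h]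
    rw [this, card_filter_val_lt m k hk]
  have hdcw : IsDCWCode w1 n1 w2 n2 d {c} := by
    constructor
    · intro x hx
      rw [Finset.mem_singleton] at hx
      subst hx
      constructor
      · simpa [hcdef] using key n1 w1 h1
      · simpa [hcdef] using key n2 w2 h2
    · intro u hu v hv huv
      rw [Finset.mem_singleton] at hu hv
      exact absurd (hu.trans hv.symm) huv
  have := card_le_T {c} hdcw
  simpa using this

lemma exists_phi {n w : ℕ} (hw : w ≤ n) (c : Fin n → ZMod 2) (hc : wtOnes c = w) :
    ∃ Φ : (Fin n → ZMod 2) → (Fin n → ZMod 2),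
      (∀ u v, hammingDist (Φ u) (Φ v) = hammingDist u v) ∧
      (∀ (ii : ℕ) (u : Fin n → ZMod 2), wtOnes u = w → hammingDist u c = 2 * ii →
        Φ u ∈ Vset n w ii) := by
  classical
  set s : Finset (Fin n) := Finset.univ.filter (fun x => c x = 1) with hs
  have hscard : s.card = w := hc
  have hsccard : sᶜ.card = n - w := by
    rw [Finset.card_compl, Fintype.card_fin, hscard]
  have hnw : w + (n - w) = n := Nat.add_sub_cancel' hw
  set σ : (Fin w ⊕ Fin (n - w)) ≃ Fin n := finSumFinEquiv.trans (finCongr hnw) with hσ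
  set e1 := s.orderIsoOfFin hscard with he1
  set e2 := sᶜ.orderIsoOfFin hsccard with he2
  set g : Fin n ≃ Fin n :=
    σ.symm.trans ((Equiv.sumCongr e1.toEquiv e2.toEquiv).trans
      ((Equiv.sumCongr (Equiv.refl _) (Equiv.subtypeEquivRight (fun x => Finset.mem_compl))).trans
        (Equiv.sumCompl (· ∈ s)))) with hg
  have P1 : ∀ t : Fin n, (c (g t) = 1 ↔ t.val < w) := by
    intro t
    rcases hcase : σ.symm t with a | b
    · have hgt : g t = (e1 a : Fin n) := by
        simp [hg, hcase]
      have hmem : (e1 a : Fin n) ∈ s := (e1 a).2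
      have htv : t.val < w := by
        have ht : t = σ (Sum.inl a) := by rw [← hcase, Equiv.apply_symm_apply]
        rw [ht]
        simpa [hσ, finSumFinEquiv_apply_left] using a.isLt
      simp only [hgt, htv, iff_true]
      exact (Finset.mem_filter.mp hmem).2
    · have hgt : g t = ((e2 b : { x // x ∈ sᶜ }) : Fin n) := by
        simp [hg, hcase]
      have hmem : ((e2 b : { x // x ∈ sᶜ }) : Fin n) ∈ sᶜ := (e2 b).2
      have hnm : g t ∉ s := by rw [hgt]; exact Finset.mem_compl.mp hmem
      have htv : ¬ t.val < w := by
        have ht : t = σ (Sum.inr b) := by rw [← hcase, Equiv.apply_symm_apply]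
        rw [ht]
        simp [hσ, finSumFinEquiv_apply_right]
      simp only [htv, iff_false]
      intro hcg
      exact hnm (by simp [hs, hcg])
  refine ⟨fun u t => u (g t) + c (g t), ?_, ?_⟩
  · intro u v
    rw [hammingDist_filter, hammingDist_filter (x := u)]
    have : (Finset.univ.filter fun t => u (g t) + c (g t) ≠ v (g t) + c (g t))
        = Finset.univ.filter fun t => u (g t) ≠ v (g t) := by
      ext t
      simp only [Finset.mem_filter, Finset.mem_univ, true_and]
      constructor
      · intro h heq; exact h (by rw [heq])
      · intro h heq; exact h (add_right_cancel heq)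
    rw [this]
    exact card_filter_equiv g (fun x => u x ≠ v x)
  · intro ii u hu hdist
    obtain ⟨hcnt1, hcnt2⟩ := count_split hu hc hdist
    rw [Vset, Finset.mem_filter]
    refine ⟨Finset.mem_univ _, ?_, ?_⟩
    · have heq : (Finset.univ.filter fun t : Fin n => t.val < w ∧ u (g t) + c (g t) = 1)
          = Finset.univ.filter fun t => c (g t) = 1 ∧ u (g t) = 0 := by
        ext t
        simp only [Finset.mem_filter, Finset.mem_univ, true_and]
        constructor
        · rintro ⟨h1, h2⟩
          have hcg : c (g t) = 1 := (P1 t).mpr h1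
          refine ⟨hcg, ?_⟩
          rw [hcg] at h2
          rcases zmod2_em (u (g t)) with h | h
          · exact h
          · rw [h] at h2; exact absurd h2 (by decide)
        · rintro ⟨h1, h2⟩
          exact ⟨(P1 t).mp h1, by rw [h1, h2]; decide⟩
      rw [heq, card_filter_equiv g (fun x => c x = 1 ∧ u x = 0)]
      exact hcnt1
    · have heq : (Finset.univ.filter fun t : Fin n => w ≤ t.val ∧ u (g t) + c (g t) = 1)
          = Finset.univ.filter fun t => c (g t) = 0 ∧ u (g t) = 1 := by
        ext t
        simp only [Finset.mem_filter, Finset.mem_univ, true_and]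
        constructor
        · rintro ⟨h1, h2⟩
          have hcg : c (g t) = 0 := by
            rcases zmod2_em (c (g t)) with h | h
            · exact h
            · exact absurd ((P1 t).mp h) (by omega)
          refine ⟨hcg, ?_⟩
          rw [hcg, add_zero] at h2
          exact h2
        · rintro ⟨h1, h2⟩
          have : ¬ t.val < w := by
            intro hlt
            rw [(P1 t).mpr hlt] at h1
            exact absurd h1 (by decide)
          exact ⟨by omega, by rw [h1, h2]; decide⟩
      rw [heq, card_filter_equiv g (fun x => c x = 0 ∧ u x = 1)]
      exact hcnt2

lemma sdist_card_le_T {n d w ii : ℕ} (hw : w ≤ n) {C : Finset (Fin n → ZMod 2)}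
    (hcode : IsCWCode n d w C) (c : Fin n → ZMod 2)
    (Φ : (Fin n → ZMod 2) → (Fin n → ZMod 2))
    (hdist : ∀ u v, hammingDist (Φ u) (Φ v) = hammingDist u v)
    (hVset : ∀ u ∈ Sdist C c (2 * ii), Φ u ∈ Vset n w ii) :
    (Sdist C c (2 * ii)).card ≤ T ii w ii (n - w) d := by
  classical
  have hnw : w + (n - w) = n := Nat.add_sub_cancel' hw
  set σ : (Fin w ⊕ Fin (n - w)) ≃ Fin n := finSumFinEquiv.trans (finCongr hnw) with hσ
  set Ψ : (Fin n → ZMod 2) → (Fin w ⊕ Fin (n - w) → ZMod 2) := fun u => Φ u ∘ σ with hΨ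
  have hΨinj : ∀ u v : Fin n → ZMod 2, Ψ u = Ψ v → Φ u = Φ v := by
    intro u v h
    funext x
    have := congrFun h (σ.symm x)
    simpa [hΨ] using this
  have hinj : Set.InjOn Ψ (Sdist C c (2 * ii)) := by
    intro u _ v _ h
    have hphieq := hΨinj u v h
    have : hammingDist u v = 0 := by rw [← hdist, hphieq, hammingDist_eq_zero]
    exact hammingDist_eq_zero.mp this
  set D := (Sdist C c (2 * ii)).image Ψ with hD
  have hcard : D.card = (Sdist C c (2 * ii)).card := Finset.card_image_of_injOn hinj
  have hdcw : IsDCWCode ii w ii (n - w) d D := by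
    constructor
    · intro x hx
      rw [hD, Finset.mem_image] at hx
      obtain ⟨u, hu, rfl⟩ := hx
      have hv := hVset u hu
      rw [Vset, Finset.mem_filter] at hv
      obtain ⟨-, hv1, hv2⟩ := hv
      constructor
      · rw [show (Finset.univ.filter fun t : Fin w => Ψ u (Sum.inl t) = 1)
            = Finset.univ.filter fun t : Fin w => (Φ u) (finCongr hnw (finSumFinEquiv (Sum.inl t))) = 1 from rfl,
          count_transfer_left hnw (fun t => Φ u t = 1)]
        exact hv1
      · rw [show (Finset.univ.filter fun t : Fin (n - w) => Ψ u (Sum.inr t) = 1)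
            = Finset.univ.filter fun t : Fin (n - w) => (Φ u) (finCongr hnw (finSumFinEquiv (Sum.inr t))) = 1 from rfl,
          count_transfer_right hnw (fun t => Φ u t = 1)]
        exact hv2
    · intro x hx y hy hxy
      rw [hD, Finset.mem_image] at hx hy
      obtain ⟨u, hu, rfl⟩ := hx
      obtain ⟨v, hv, rfl⟩ := hy
      have huv : u ≠ v := fun h => hxy (by rw [h])
      have h1 : hammingDist (Ψ u) (Ψ v) = hammingDist u v := by
        rw [hΨ]
        show hammingDist (Φ u ∘ σ) (Φ v ∘ σ) = _
        rw [hammingDist_comp_equiv σ (Φ u) (Φ v)]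
        exact hdist u v
      rw [h1]
      rw [Sdist, Finset.mem_filter] at hu hv
      exact hcode.2 u hu.1 v hv.1 huv
  rw [← hcard]
  exact card_le_T D hdcw

/-- For a nonempty `(n,d,w)` constant-weight code `C` (`d` even,
`d < 2w ≤ n`) with distance distribution `{A_{2i}}`, `i ≠ j` in `H` with
`m_{i,j} < d`, and integers `P_i ≥ T(i,w,i,n-w,d)`, `P_j ≥ T(j,w,j,n-w,d)`, one has
`A_{2i}/P_i + A_{2j}/P_j ≤ 1`. -/
theorem distDistr_pair_bound (n d w i j : ℕ) (C : Finset (Fin n → ZMod 2)) (hC : C.Nonempty)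
    (hcode : IsCWCode n d w C) (hd : Even d) (hdw : d < 2 * w) (hwn : 2 * w ≤ n)
    (hi : i ∈ Finset.Icc (d / 2) w) (hj : j ∈ Finset.Icc (d / 2) w) (hij : i ≠ j)
    (hm : mMax n w i j < d)
    (Pi Pj : ℤ) (hPi : (T i w i (n - w) d : ℤ) ≤ Pi) (hPj : (T j w j (n - w) d : ℤ) ≤ Pj) :
    distDistr C (2 * i) / (Pi : ℚ) + distDistr C (2 * j) / (Pj : ℚ) ≤ 1 := by
  classical
  obtain ⟨hwt, hmin⟩ := hcode
  rw [Finset.mem_Icc] at hi hj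
  have hw_le_n : w ≤ n := by omega
  have hi_nw : i ≤ n - w := by omega
  have hj_nw : j ≤ n - w := by omega
  have hTi : 1 ≤ T i w i (n - w) d := one_le_T hi.2 hi_nw
  have hTj : 1 ≤ T j w j (n - w) d := one_le_T hj.2 hj_nw
  have hPi1 : (1 : ℤ) ≤ Pi := le_trans (by exact_mod_cast hTi) hPi
  have hPj1 : (1 : ℤ) ≤ Pj := le_trans (by exact_mod_cast hTj) hPj
  have hPi0 : (0 : ℚ) < (Pi : ℚ) := by
    have : (0 : ℤ) < Pi := by omega
    exact_mod_cast this
  have hPj0 : (0 : ℚ) < (Pj : ℚ) := by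
    have : (0 : ℤ) < Pj := by omega
    exact_mod_cast this
  have key : ∀ c ∈ C,
      ((Sdist C c (2 * i)).card : ℚ) / (Pi : ℚ) + ((Sdist C c (2 * j)).card : ℚ) / (Pj : ℚ) ≤ 1 := by
    intro c hcC
    obtain ⟨Φ, hd1, hd2⟩ := exists_phi hw_le_n c (hwt c hcC)
    have hVi : ∀ u ∈ Sdist C c (2 * i), Φ u ∈ Vset n w i := by
      intro u hu
      rw [Sdist, Finset.mem_filter] at hu
      exact hd2 i u (hwt u hu.1) hu.2
    have hVj : ∀ u ∈ Sdist C c (2 * j), Φ u ∈ Vset n w j := by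
      intro u hu
      rw [Sdist, Finset.mem_filter] at hu
      exact hd2 j u (hwt u hu.1) hu.2
    have hbi : (Sdist C c (2 * i)).card ≤ T i w i (n - w) d :=
      sdist_card_le_T hw_le_n ⟨hwt, hmin⟩ c Φ hd1 hVi
    have hbj : (Sdist C c (2 * j)).card ≤ T j w j (n - w) d :=
      sdist_card_le_T hw_le_n ⟨hwt, hmin⟩ c Φ hd1 hVj
    have hdisj : Sdist C c (2 * i) = ∅ ∨ Sdist C c (2 * j) = ∅ := by
      by_contra h
      push_neg at h
      obtain ⟨a, ha⟩ := h.1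
      obtain ⟨b, hb⟩ := h.2
      rw [Sdist, Finset.mem_filter] at ha hb
      have hab : a ≠ b := by
        intro h'
        rw [h'] at ha
        have := ha.2.symm.trans hb.2
        omega
      have h1 : Φ a ∈ Vset n w i := hd2 i a (hwt a ha.1) ha.2
      have h2 : Φ b ∈ Vset n w j := hd2 j b (hwt b hb.1) hb.2
      have hle : hammingDist (Φ a) (Φ b) ≤ mMax n w i j := by
        rw [mMax]
        exact Finset.le_sup (f := fun p : (Fin n → ZMod 2) × (Fin n → ZMod 2) =>
          hammingDist p.1 p.2) (b := (Φ a, Φ b)) (Finset.mem_product.mpr ⟨h1, h2⟩)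
      rw [hd1 a b] at hle
      have := hmin a ha.1 b hb.1 hab
      omega
    have hiQ : ((Sdist C c (2 * i)).card : ℚ) ≤ (Pi : ℚ) := by
      have : ((Sdist C c (2 * i)).card : ℤ) ≤ Pi := le_trans (by exact_mod_cast hbi) hPi
      exact_mod_cast this
    have hjQ : ((Sdist C c (2 * j)).card : ℚ) ≤ (Pj : ℚ) := by
      have : ((Sdist C c (2 * j)).card : ℤ) ≤ Pj := le_trans (by exact_mod_cast hbj) hPj
      exact_mod_cast this
    rcases hdisj with h | h
    · rw [h]
      simp only [Finset.card_empty, Nat.cast_zero, zero_div, zero_add]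
      exact (div_le_one hPj0).mpr hjQ
    · rw [h]
      simp only [Finset.card_empty, Nat.cast_zero, zero_div, add_zero]
      exact (div_le_one hPi0).mpr hiQ
  have hq0 : (0 : ℚ) < (C.card : ℚ) := by
    have := Finset.card_pos.mpr hC
    exact_mod_cast this
  have heq : distDistr C (2 * i) / (Pi : ℚ) + distDistr C (2 * j) / (Pj : ℚ)
      = (∑ c ∈ C, (((Sdist C c (2 * i)).card : ℚ) / (Pi : ℚ)
          + ((Sdist C c (2 * j)).card : ℚ) / (Pj : ℚ))) / (C.card : ℚ) := by
    rw [distDistr, distDistr, Finset.sum_add_distrib, ← Finset.sum_div, ← Finset.sum_div]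
    ring
  rw [heq, div_le_one hq0]
  calc (∑ c ∈ C, (((Sdist C c (2 * i)).card : ℚ) / (Pi : ℚ)
          + ((Sdist C c (2 * j)).card : ℚ) / (Pj : ℚ)))
      ≤ ∑ _c ∈ C, (1 : ℚ) := Finset.sum_le_sum key
    _ = (C.card : ℚ) := by simp
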